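/- Let q be a prime power, k < n ≤ m, α = (α_1,...,α_n) ∈ F_{q^m}^n with the α_i linearly independent over F_q, η ∈ F_{q^m}*, 0 ≤ h ≤ k-1. Let C₁ ⊆ F_{q^m}^n be the twisted Gabidulin code with one twist at position h with t = 0, i.e., spanned by rows (α_j^{q^i})_j for i ∈ {0,...,k-1}\{h} and the row (α_j^{q^h} + η α_j^{q^k})_j. Then the rank-metric covering radius of C₁ equals n-k, i.e., max over u ∈ F_{q^m}^n of min over c ∈ C₁ of the rank weight of u - c equals n - k. -/

import Mathlib

open Polynomial

lemma linMap_exists {Fq K : Type*} [Field Fq] [Fintype Fq] [Field K] [Fintype K] [Algebra Fq K]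
    (q : ℕ) (hq : Fintype.card Fq = q) (kk : ℕ) (c : Fin (kk+1) → K) :
    ∃ L : K →ₗ[Fq] K, (∀ x, L x = ∑ i, c i * x ^ q ^ (i:ℕ)) ∧
      (c ≠ 0 → Module.finrank Fq (LinearMap.ker L) ≤ kk) := by
  classical
  set p := ringChar Fq with hp
  obtain ⟨s, hpprime, hcard⟩ := FiniteField.card Fq p
  haveI : Fact p.Prime := ⟨hpprime⟩
  haveI : CharP K p := charP_of_injective_ringHom (algebraMap Fq K).injective p
  have hq2 : 2 ≤ q := hq ▸ Fintype.one_lt_card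
  have hqpow : ∀ i : ℕ, q ^ i = p ^ ((s:ℕ) * i) := by
    intro i; rw [pow_mul, ← hcard, hq]
  obtain ⟨L, hL⟩ : ∃ L : K →ₗ[Fq] K, ∀ x, L x = ∑ i, c i * x ^ q ^ (i:ℕ) :=
    ⟨{ toFun := fun x => ∑ i, c i * x ^ q ^ (i:ℕ)
       map_add' := by
         intro x y
         rw [← Finset.sum_add_distrib]
         refine Finset.sum_congr rfl fun i _ => ?_
         rw [hqpow, add_pow_char_pow, mul_add]
       map_smul' := by
         intro a x
         simp only [RingHom.id_apply, Finset.smul_sum]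
         refine Finset.sum_congr rfl fun i _ => ?_
         rw [Algebra.smul_def, Algebra.smul_def, mul_pow, ← map_pow, ← hq,
           FiniteField.pow_card_pow]
         ring }, fun x => rfl⟩
  refine ⟨L, hL, ?_⟩
  intro hc
  obtain ⟨i0, hi0⟩ : ∃ i0, c i0 ≠ 0 := by
    by_contra hcon; push_neg at hcon; exact hc (funext hcon)
  set P : K[X] := ∑ i : Fin (kk+1), C (c i) * X ^ (q ^ (i:ℕ)) with hP
  have hcoeff : P.coeff (q ^ (i0:ℕ)) = c i0 := by
    rw [hP, finset_sum_coeff]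
    rw [Finset.sum_eq_single i0]
    · simp
    · intro b _ hbne
      rw [coeff_C_mul, coeff_X_pow, if_neg, mul_zero]
      intro hbeq
      exact hbne (Fin.ext (Nat.pow_right_injective hq2 hbeq.symm))
    · simp
  have hPne : P ≠ 0 := fun h0 => hi0 (by simpa [h0] using hcoeff.symm)
  have hdeg : P.natDegree ≤ q ^ kk := by
    refine Polynomial.natDegree_sum_le_of_forall_le _ _ fun i _ => ?_
    refine le_trans (natDegree_C_mul_le _ _) ?_
    simpa using Nat.pow_le_pow_right (le_trans one_le_two hq2) (Nat.le_of_lt_succ i.2)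
  have hroot : ∀ x ∈ LinearMap.ker L, x ∈ P.roots.toFinset := by
    intro x hx
    rw [Multiset.mem_toFinset, mem_roots hPne]
    have h0 : L x = 0 := hx
    rw [hL] at h0
    rw [IsRoot, hP]
    simpa [eval_finset_sum] using h0
  have hcardker : Fintype.card (LinearMap.ker L) ≤ q ^ kk := by
    have h1 : Fintype.card (LinearMap.ker L) ≤ P.roots.toFinset.card := by
      have h2 : Fintype.card (LinearMap.ker L) ≤ Fintype.card (P.roots.toFinset : Finset K) :=
        Fintype.card_le_of_injective
          (fun x => (⟨x.1, hroot x.1 x.2⟩ : (P.roots.toFinset : Finset K)))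
          (fun a b hab => by
            apply Subtype.ext
            exact Subtype.mk_eq_mk.mp hab)
      rwa [Fintype.card_coe] at h2
    refine h1.trans ?_
    exact le_trans (Multiset.toFinset_card_le _) (le_trans (Polynomial.card_roots' P) hdeg)
  have hcardeq : Fintype.card (LinearMap.ker L) = q ^ Module.finrank Fq (LinearMap.ker L) := by
    rw [← hq]; exact Module.card_eq_pow_finrank
  rw [hcardeq] at hcardker
  exact (Nat.pow_le_pow_iff_right hq2).mp hcardker

lemma rank_image_ge {Fq K : Type*} [Field Fq] [Fintype Fq] [Field K] [Fintype K] [Algebra Fq K]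
    {n kk : ℕ} (αv : Fin n → K) (hα : LinearIndependent Fq αv)
    (L : K →ₗ[Fq] K) (hker : Module.finrank Fq (LinearMap.ker L) ≤ kk) :
    n - kk ≤ Module.finrank Fq (Submodule.span Fq (Set.range (fun j => L (αv j)))) := by
  set W := Submodule.span Fq (Set.range αv) with hW
  have hWrank : Module.finrank Fq W = n := by
    rw [hW, finrank_span_eq_card hα, Fintype.card_fin]
  have himg : Submodule.span Fq (Set.range (fun j => L (αv j))) = Submodule.map L W := by
    rw [hW, Submodule.map_span, ← Set.range_comp]; rfl
  rw [himg]
  set f : W →ₗ[Fq] K := L.comp W.subtype with hf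
  have hrange : LinearMap.range f = Submodule.map L W := by
    rw [hf, LinearMap.range_comp, Submodule.range_subtype]
  have hkerf : Module.finrank Fq (LinearMap.ker f) ≤ kk := by
    refine le_trans ?_ hker
    refine LinearMap.finrank_le_finrank_of_injective
      (f := (W.subtype).restrict (p := LinearMap.ker f) (q := LinearMap.ker L)
        (fun x hx => by simpa [hf] using hx)) ?_
    intro a b hab
    have h1 := congrArg Subtype.val hab
    apply Subtype.ext; apply Subtype.ext
    exact h1
  have := LinearMap.finrank_range_add_finrank_ker f
  rw [hrange, hWrank] at this
  omega

lemma covering_le {Fq K : Type*} [Field Fq] [Fintype Fq] [Field K] [Fintype K] [Algebra Fq K]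
    {n kk : ℕ} (V : Submodule K (Fin n → K)) (hV : kk ≤ Module.finrank K V)
    (u : Fin n → K) :
    ∃ c ∈ V, Module.finrank Fq (Submodule.span Fq (Set.range (u - c))) ≤ n - kk := by
  classical
  set e : Fin n → (Fin n → K) := fun j => Pi.single j 1 with he
  have hspan_e : Submodule.span K (Set.range e) = ⊤ := by
    have := (Pi.basisFun K (Fin n)).span_eq
    simpa [he, Pi.basisFun] using this
  set s : Set ((Fin n → K) ⧸ V) := V.mkQ '' (Set.range e) with hs0
  have hs : Submodule.span K s = ⊤ := by
    rw [hs0, Submodule.span_image, hspan_e, Submodule.map_top, Submodule.range_mkQ]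
  obtain ⟨t, hts, htspan, htind⟩ := exists_linearIndependent K s
  have htfin : t.Finite := htind.setFinite
  letI := htfin.fintype
  have htcard : t.toFinset.card ≤ n - kk := by
    have h1 : Module.finrank K (Submodule.span K t) = t.toFinset.card :=
      finrank_span_set_eq_card htind
    rw [htspan, hs] at h1
    have h2 := Submodule.finrank_quotient_add_finrank V
    rw [Module.finrank_pi, Fintype.card_fin] at h2
    rw [finrank_top] at h1
    omega
  have hchoice : ∀ y : t, ∃ j : Fin n, V.mkQ (e j) = (y : (Fin n → K) ⧸ V) := by
    rintro ⟨y, hy⟩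
    obtain ⟨x, ⟨j, rfl⟩, hxy⟩ := hts hy
    exact ⟨j, hxy⟩
  choose φ hφ using hchoice
  set T : Set (Fin n) := Set.range φ with hT
  have hTfin : T.Finite := Set.finite_range φ
  have hTcard : T.ncard ≤ n - kk := by
    refine le_trans ?_ htcard
    have h3 : T.ncard ≤ Fintype.card t := by
      rw [hT]
      have : Set.range φ = ↑(Finset.image φ Finset.univ) := by
        ext j; simp
      rw [this, Set.ncard_coe_finset]
      exact le_trans (Finset.card_image_le) (by simp)
    rw [Set.toFinset_card] at *
    exact h3
  have htsub : t ⊆ V.mkQ '' (e '' T) := by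
    intro y hy
    exact ⟨e (φ ⟨y, hy⟩), ⟨φ ⟨y, hy⟩, ⟨⟨y, hy⟩, rfl⟩, rfl⟩, hφ ⟨y, hy⟩⟩
  have htop : (⊤ : Submodule K ((Fin n → K) ⧸ V)) ≤ Submodule.map V.mkQ (Submodule.span K (e '' T)) := by
    rw [← hs, ← htspan, Submodule.map_span]
    exact Submodule.span_mono htsub
  obtain ⟨w, hw, hwu⟩ := htop (Submodule.mem_top (x := V.mkQ u))
  refine ⟨u - w, ?_, ?_⟩
  · have h0 : V.mkQ (u - w) = 0 := by rw [map_sub, hwu, sub_self]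
    rwa [Submodule.mkQ_apply, Submodule.Quotient.mk_eq_zero] at h0
  · have huw : u - (u - w) = w := by ring_nf
    rw [huw]
    -- w vanishes off T
    have hwT : ∀ j, j ∉ T → w j = 0 := by
      have hle : Submodule.span K (e '' T) ≤ Submodule.pi Tᶜ (fun _ => ⊥) := by
        rw [Submodule.span_le]
        rintro x ⟨j', hj', rfl⟩
        intro j hj
        have : j ≠ j' := fun hjj => hj (hjj ▸ hj')
        exact (Submodule.mem_bot K).mpr (by simp [he, Pi.single_eq_of_ne this])
      intro j hj
      have := hle hw j hj
      exact (Submodule.mem_bot K).mp this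
    -- rank weight bound
    have hsub : Set.range w ⊆ insert 0 (w '' T) := by
      rintro x ⟨j, rfl⟩
      by_cases hj : j ∈ T
      · exact Set.mem_insert_of_mem _ ⟨j, hj, rfl⟩
      · rw [hwT j hj]; exact Set.mem_insert _ _
    have hmono : Submodule.span Fq (Set.range w) ≤ Submodule.span Fq (w '' T) := by
      refine le_trans (Submodule.span_mono hsub) ?_
      rw [Submodule.span_insert_zero]
    have hfinim : (w '' T).Finite := hTfin.image w
    letI := hfinim.fintype
    have hcard : Module.finrank Fq (Submodule.span Fq (w '' T)) ≤ n - kk := by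
      refine le_trans (finrank_span_le_card (w '' T)) ?_
      refine le_trans ?_ hTcard
      rw [← Set.ncard_eq_toFinset_card']
      exact Set.ncard_image_le hTfin
    exact le_trans (Submodule.finrank_mono hmono) hcard


open Finset

theorem C1_covering_radius {Fq K : Type*} [Field Fq] [Fintype Fq] [Field K] [Fintype K]
    [Algebra Fq K] (q m n k h : ℕ) (hq : Fintype.card Fq = q) (hK : Fintype.card K = q ^ m)
    (hkn : k < n) (hnm : n ≤ m) (hh : h < k)
    (α : ℕ → K) (hα : LinearIndependent Fq (fun i : Fin n => α (i:ℕ)))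
    (η : K) (hη : η ≠ 0) :
    sSup {d : ℕ | ∃ u : Fin n → K,
        d = sInf {w : ℕ | ∃ c ∈ Submodule.span K (Set.range (fun i : Fin k => fun j : Fin n =>
              if (i:ℕ) = h then α (j:ℕ) ^ q ^ h + η * α (j:ℕ) ^ q ^ k
              else α (j:ℕ) ^ q ^ (i:ℕ))),
            w = Module.finrank Fq (Submodule.span Fq (Set.range (u - c)))}} = n - k := by
  classical
  set g : Fin k → (Fin n → K) := fun i : Fin k => fun j : Fin n =>
              if (i:ℕ) = h then α (j:ℕ) ^ q ^ h + η * α (j:ℕ) ^ q ^ k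
              else α (j:ℕ) ^ q ^ (i:ℕ) with hg
  set V : Submodule K (Fin n → K) := Submodule.span K (Set.range g) with hV
  have hFh : ((⟨h, hh⟩ : Fin k) : ℕ) = h := rfl
  -- (B) sum identity
  have hsum : ∀ (μ : Fin k → K) (j : Fin n), (∑ i, μ i • g i) j
      = (∑ i : Fin k, μ i * α (j:ℕ) ^ q ^ (i:ℕ)) + μ ⟨h, hh⟩ * (η * α (j:ℕ) ^ q ^ k) := by
    intro μ j
    have hterm : ∀ i : Fin k, μ i * g i j
        = μ i * α (j:ℕ) ^ q ^ (i:ℕ) + (if i = ⟨h, hh⟩ then μ i * (η * α (j:ℕ) ^ q ^ k) else 0) := by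
      intro i
      by_cases hi : i = (⟨h, hh⟩ : Fin k)
      · subst hi
        have hgj : g ⟨h, hh⟩ j = α (j:ℕ) ^ q ^ h + η * α (j:ℕ) ^ q ^ k := by
          simp [hg]
        rw [hgj, if_pos rfl]
        ring
      · have hi' : (i:ℕ) ≠ h := fun hc => hi (Fin.ext hc)
        simp only [hg, if_neg hi', if_neg hi, add_zero]
    calc (∑ i, μ i • g i) j = ∑ i : Fin k, μ i * g i j := by
          simp [Finset.sum_apply]
      _ = ∑ i : Fin k, (μ i * α (j:ℕ) ^ q ^ (i:ℕ)
            + (if i = ⟨h, hh⟩ then μ i * (η * α (j:ℕ) ^ q ^ k) else 0)) :=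
          Finset.sum_congr rfl fun i _ => hterm i
      _ = (∑ i : Fin k, μ i * α (j:ℕ) ^ q ^ (i:ℕ)) + μ ⟨h, hh⟩ * (η * α (j:ℕ) ^ q ^ k) := by
          rw [Finset.sum_add_distrib, Finset.sum_ite_eq' Finset.univ (⟨h, hh⟩ : Fin k)]
          simp
  -- (C) linear independence of the rows over K
  have hgind : LinearIndependent K g := by
    by_contra hdep
    obtain ⟨μ, hμsum, i1, hi1⟩ := Fintype.not_linearIndependent_iff.mp hdep
    set dd : Fin (k+1) → K := fun i => if hik : (i:ℕ) < k then μ ⟨i, hik⟩ else μ ⟨h, hh⟩ * η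
      with hdd
    obtain ⟨L, hL, hLker⟩ := linMap_exists q hq k dd
    have hdd0 : dd ≠ 0 := by
      intro h0
      apply hi1
      have h1 := congrFun h0 (Fin.castSucc i1)
      simpa [hdd, i1.2] using h1
    have hLα : ∀ j : Fin n, L (α (j:ℕ)) = 0 := by
      intro j
      rw [hL, Fin.sum_univ_castSucc]
      have h2 : ∀ i : Fin k, dd (Fin.castSucc i) * α (j:ℕ) ^ q ^ ((Fin.castSucc i : Fin (k+1)):ℕ)
          = μ i * α (j:ℕ) ^ q ^ (i:ℕ) := by
        intro i
        simp [hdd, i.2]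
      rw [Finset.sum_congr rfl fun i _ => h2 i]
      have h3 : dd (Fin.last k) = μ ⟨h, hh⟩ * η := by simp [hdd]
      rw [h3]
      have h4 := congrFun hμsum j
      rw [hsum μ j] at h4
      simp only [Pi.zero_apply] at h4
      simp only [Fin.val_last]
      linear_combination h4
    have hker : Submodule.span Fq (Set.range (fun i : Fin n => α (i:ℕ))) ≤ LinearMap.ker L := by
      rw [Submodule.span_le]
      rintro x ⟨j, rfl⟩
      exact hLα j
    have hn : n ≤ k := by
      have h1 : Module.finrank Fq (Submodule.span Fq (Set.range (fun i : Fin n => α (i:ℕ)))) = n := by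
        rw [finrank_span_eq_card hα, Fintype.card_fin]
      calc n = Module.finrank Fq (Submodule.span Fq (Set.range (fun i : Fin n => α (i:ℕ)))) := h1.symm
        _ ≤ Module.finrank Fq (LinearMap.ker L) := Submodule.finrank_mono hker
        _ ≤ k := hLker hdd0
    omega
  have hVrank : Module.finrank K V = k := by
    rw [hV, finrank_span_eq_card hgind, Fintype.card_fin]
  -- upper bound for every u
  have hub : ∀ u : Fin n → K,
      ∃ c ∈ V, Module.finrank Fq (Submodule.span Fq (Set.range (u - c))) ≤ n - k :=
    fun u => covering_le V (le_of_eq hVrank.symm) u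
  -- the special word
  set u0 : Fin n → K := fun j : Fin n => α (j:ℕ) ^ q ^ h with hu0
  have hlbu : ∀ c ∈ V, n - k ≤ Module.finrank Fq (Submodule.span Fq (Set.range (u0 - c))) := by
    intro c hc
    rw [hV] at hc
    obtain ⟨μ, hμ⟩ := (Submodule.mem_span_range_iff_exists_fun K).mp hc
    set cc : Fin (k+1) → K := fun i =>
      if hik : (i:ℕ) < k then ((if (i:ℕ) = h then 1 else 0) - μ ⟨i, hik⟩)
      else -(μ ⟨h, hh⟩ * η) with hcc
    obtain ⟨L, hL, hLker⟩ := linMap_exists q hq k cc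
    have hcc0 : cc ≠ 0 := by
      intro h0
      by_cases hμh : μ ⟨h, hh⟩ = 1
      · have h1 := congrFun h0 (Fin.last k)
        simp [hcc, hμh] at h1
        exact hη h1
      · have h1 := congrFun h0 (Fin.castSucc (⟨h, hh⟩ : Fin k))
        simp [hcc, hh] at h1
        exact hμh (by linear_combination -h1)
    have heq : u0 - c = fun j : Fin n => L (α (j:ℕ)) := by
      funext j
      rw [hL, Fin.sum_univ_castSucc]
      have h2 : ∀ i : Fin k, cc (Fin.castSucc i) * α (j:ℕ) ^ q ^ ((Fin.castSucc i : Fin (k+1)):ℕ)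
          = ((if i = ⟨h, hh⟩ then (1:K) else 0) - μ i) * α (j:ℕ) ^ q ^ (i:ℕ) := by
        intro i
        by_cases hi : i = (⟨h, hh⟩ : Fin k)
        · subst hi
          simp [hcc, hh]
        · have hi' : (i:ℕ) ≠ h := fun hcon => hi (Fin.ext hcon)
          simp [hcc, i.2, hi, hi']
      rw [Finset.sum_congr rfl fun i _ => h2 i]
      have h3 : cc (Fin.last k) = -(μ ⟨h, hh⟩ * η) := by simp [hcc]
      rw [h3]
      have h4 : (u0 - c) j = u0 j - (∑ i, μ i • g i) j := by rw [hμ]; rfl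
      have hu0j : u0 j = α (j:ℕ) ^ q ^ h := rfl
      rw [h4, hsum μ j, hu0j]
      have h5 : ∑ i : Fin k, ((if i = ⟨h, hh⟩ then (1:K) else 0) - μ i) * α (j:ℕ) ^ q ^ (i:ℕ)
          = α (j:ℕ) ^ q ^ h - ∑ i : Fin k, μ i * α (j:ℕ) ^ q ^ (i:ℕ) := by
        have e1 : ∀ i ∈ Finset.univ, ((if i = ⟨h, hh⟩ then (1:K) else 0) - μ i) * α (j:ℕ) ^ q ^ (i:ℕ)
            = (if i = ⟨h, hh⟩ then α (j:ℕ) ^ q ^ (i:ℕ) else 0) - μ i * α (j:ℕ) ^ q ^ (i:ℕ) := by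
          intro i _
          by_cases hi : i = (⟨h, hh⟩ : Fin k)
          · rw [if_pos hi, if_pos hi]; ring
          · rw [if_neg hi, if_neg hi]; ring
        rw [Finset.sum_congr rfl e1, Finset.sum_sub_distrib,
          Finset.sum_ite_eq' Finset.univ (⟨h, hh⟩ : Fin k)]
        simp [hFh]
      rw [h5]
      simp only [Fin.val_last]
      ring
    rw [heq]
    exact rank_image_ge (fun i : Fin n => α (i:ℕ)) hα L (hLker hcc0)
  -- assemble
  have hinf_le : ∀ u : Fin n → K,
      sInf {w : ℕ | ∃ c ∈ V, w = Module.finrank Fq (Submodule.span Fq (Set.range (u - c)))} ≤ n - k := by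
    intro u
    obtain ⟨c, hc, hle⟩ := hub u
    exact le_trans (Nat.sInf_le ⟨c, hc, rfl⟩) hle
  have hinf_u0 : sInf {w : ℕ | ∃ c ∈ V,
      w = Module.finrank Fq (Submodule.span Fq (Set.range (u0 - c)))} = n - k := by
    refine le_antisymm (hinf_le u0) ?_
    refine le_csInf ⟨_, ⟨0, V.zero_mem, rfl⟩⟩ ?_
    rintro w ⟨c, hc, rfl⟩
    exact hlbu c hc
  refine le_antisymm ?_ ?_
  · refine csSup_le ⟨n - k, ⟨u0, hinf_u0.symm⟩⟩ ?_
    rintro d ⟨u, rfl⟩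
    exact hinf_le u
  · refine le_csSup ⟨n - k, ?_⟩ ⟨u0, hinf_u0.symm⟩
    rintro d ⟨u, rfl⟩
    exact hinf_le u
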